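/- With λ₁⁰ as above, for all j, m ∈ ℕ and t > 0, |∂^{j+m}/(∂aʲ ∂bᵐ) e^{λ₁⁰(r,a,b) t}| ≤ C e^{-c r^{2(σ-σ₁)} t} r^{2j(σ₂-σ₁)+2m(σ-2σ₁)} for all (r,a,b) ∈ (0,ε*] × [0,1]² with suitable positive constants C, c independent of r, a, b, t. -/

import Mathlib

open Real Set

noncomputable def Gamma1 (σ₁ σ₂ r a : ℝ) : ℝ := (1 + a * r ^ (2*(σ₂-σ₁)))⁻¹

noncomputable def Gamma2 (σ σ₁ σ₂ r a b : ℝ) : ℝ :=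
  Real.sqrt (1 - 4*b*r ^ (2*(σ-2*σ₁)) * (Gamma1 σ₁ σ₂ r a)^2)

/-- Mixed partial derivative `∂^{j+m}/(∂aʲ ∂bᵐ)`. -/
noncomputable def pderiv2 (j m : ℕ) (f : ℝ → ℝ → ℝ) (a b : ℝ) : ℝ :=
  iteratedDeriv m (fun b' => iteratedDeriv j (fun a' => f a' b') a) b

noncomputable def lam1 (σ σ₁ σ₂ r a b : ℝ) : ℝ :=
  -2 * r ^ (2*(σ-σ₁)) * Gamma1 σ₁ σ₂ r a * (1 + Gamma2 σ σ₁ σ₂ r a b)⁻¹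

noncomputable def lam2 (σ σ₁ σ₂ r a b : ℝ) : ℝ :=
  -(r ^ (2*σ₁) / 2) * (1 + a * r ^ (2*(σ₂-σ₁))) * (1 + Gamma2 σ σ₁ σ₂ r a b)

noncomputable def Gfun (σ σ₁ σ₂ r a b : ℝ) : ℝ :=
  r ^ (2*σ₁) * (1 + a * r ^ (2*(σ₂-σ₁))) * Gamma2 σ σ₁ σ₂ r a b

namespace Stmt4Aux

/-- `u = 1 + a r^{2(σ₂-σ₁)}`, so that `Gamma1 = u⁻¹`. -/
noncomputable def uF (σ₁ σ₂ r a : ℝ) : ℝ := 1 + a * r ^ (2*(σ₂-σ₁))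

/-- `w`, so that `Gamma2 = √w`. -/
noncomputable def wF (σ σ₁ σ₂ r a b : ℝ) : ℝ :=
  1 - 4*b*r ^ (2*(σ-2*σ₁)) * (Gamma1 σ₁ σ₂ r a)^2

lemma Gamma1_eq (σ₁ σ₂ r a : ℝ) : Gamma1 σ₁ σ₂ r a = (uF σ₁ σ₂ r a)⁻¹ := rfl

lemma Gamma2_eq (σ σ₁ σ₂ r a b : ℝ) :
    Gamma2 σ σ₁ σ₂ r a b = Real.sqrt (wF σ σ₁ σ₂ r a b) := rfl

/-- generators -/
noncomputable def gg1 (σ₁ σ₂ : ℝ) : ℝ → ℝ → ℝ → ℝ → ℝ :=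
  fun r _ a _ => r ^ (2*(σ₂-σ₁)) * Gamma1 σ₁ σ₂ r a

noncomputable def gg2 (σ σ₁ σ₂ : ℝ) : ℝ → ℝ → ℝ → ℝ → ℝ :=
  fun r _ a b => b * (r ^ (2*(σ-2*σ₁)) * (Gamma1 σ₁ σ₂ r a)^2)

noncomputable def gg3 (σ σ₁ σ₂ : ℝ) : ℝ → ℝ → ℝ → ℝ → ℝ :=
  fun r _ a _ => r ^ (2*(σ-2*σ₁)) * (Gamma1 σ₁ σ₂ r a)^2

noncomputable def gg4 (σ σ₁ σ₂ : ℝ) : ℝ → ℝ → ℝ → ℝ → ℝ :=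
  fun r _ a b => (Gamma2 σ σ₁ σ₂ r a b)⁻¹

noncomputable def gg5 (σ σ₁ σ₂ : ℝ) : ℝ → ℝ → ℝ → ℝ → ℝ :=
  fun r _ a b => (1 + Gamma2 σ σ₁ σ₂ r a b)⁻¹

noncomputable def ggL (σ σ₁ σ₂ : ℝ) : ℝ → ℝ → ℝ → ℝ → ℝ :=
  fun r t a b => lam1 σ σ₁ σ₂ r a b * t

/-- The class of functions appearing as coefficients of mixed derivatives of
`exp(λ₁ t)`, graded by the guaranteed powers of `r^{2(σ₂-σ₁)}` and `r^{2(σ-2σ₁)}`. -/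
inductive Mem (σ σ₁ σ₂ : ℝ) : ℕ → ℕ → (ℝ → ℝ → ℝ → ℝ → ℝ) → Prop where
  | const (c : ℝ) : Mem σ σ₁ σ₂ 0 0 (fun _ _ _ _ => c)
  | zero (p q : ℕ) : Mem σ σ₁ σ₂ p q (fun _ _ _ _ => 0)
  | G1 : Mem σ σ₁ σ₂ 1 0 (gg1 σ₁ σ₂)
  | G2 : Mem σ σ₁ σ₂ 0 0 (gg2 σ σ₁ σ₂)
  | G3 : Mem σ σ₁ σ₂ 0 1 (gg3 σ σ₁ σ₂)
  | G4 : Mem σ σ₁ σ₂ 0 0 (gg4 σ σ₁ σ₂)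
  | G5 : Mem σ σ₁ σ₂ 0 0 (gg5 σ σ₁ σ₂)
  | LL : Mem σ σ₁ σ₂ 0 0 (ggL σ σ₁ σ₂)
  | add {p q f g} : Mem σ σ₁ σ₂ p q f → Mem σ σ₁ σ₂ p q g →
      Mem σ σ₁ σ₂ p q (fun r t a b => f r t a b + g r t a b)
  | mul {p q p' q' f g} : Mem σ σ₁ σ₂ p q f → Mem σ σ₁ σ₂ p' q' g →
      Mem σ σ₁ σ₂ (p+p') (q+q') (fun r t a b => f r t a b * g r t a b)

lemma Mem.of_eq {σ σ₁ σ₂ : ℝ} {p q p' q' : ℕ} {f g : ℝ → ℝ → ℝ → ℝ → ℝ}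
    (h : Mem σ σ₁ σ₂ p q f) (hp : p = p') (hq : q = q')
    (hfg : ∀ r t a b, f r t a b = g r t a b) : Mem σ σ₁ σ₂ p' q' g := by
  subst hp; subst hq
  have : f = g := funext fun r => funext fun t => funext fun a => funext fun b => hfg r t a b
  exact this ▸ h

/-- Context of constants for the domain `(0,ε*] × [-ρ,1+ρ]²`. -/
structure Ctx (σ σ₁ σ₂ εs ρ δw M3 : ℝ) : Prop where
  hεs : 0 < εs
  hρ : 0 < ρ
  hδ : 0 < δw
  hδ1 : δw ≤ 1
  hM3 : 0 ≤ M3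
  hu : ∀ r ∈ Ioc (0:ℝ) εs, ∀ a ∈ Icc (-ρ) (1+ρ), 1/2 ≤ uF σ₁ σ₂ r a
  hw : ∀ r ∈ Ioc (0:ℝ) εs, ∀ a ∈ Icc (-ρ) (1+ρ), ∀ b ∈ Icc (-ρ) (1+ρ),
        δw ≤ wF σ σ₁ σ₂ r a b
  hR3 : ∀ r ∈ Ioc (0:ℝ) εs, r ^ (2*(σ-2*σ₁)) ≤ M3


lemma Ctx.upos {σ σ₁ σ₂ εs ρ δw M3 : ℝ} (hc : Ctx σ σ₁ σ₂ εs ρ δw M3) {r a : ℝ}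
    (hr : r ∈ Ioc (0:ℝ) εs) (ha : a ∈ Icc (-ρ) (1+ρ)) :
    0 < uF σ₁ σ₂ r a := lt_of_lt_of_le (by norm_num) (hc.hu r hr a ha)

lemma Ctx.G1le {σ σ₁ σ₂ εs ρ δw M3 : ℝ} (hc : Ctx σ σ₁ σ₂ εs ρ δw M3) {r a : ℝ}
    (hr : r ∈ Ioc (0:ℝ) εs) (ha : a ∈ Icc (-ρ) (1+ρ)) :
    Gamma1 σ₁ σ₂ r a ≤ 2 := by
  have h := hc.hu r hr a ha
  rw [Gamma1_eq]
  have h2 : (0:ℝ) < (2:ℝ)⁻¹ := by norm_num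
  have h3 := inv_anti₀ h2 (by linarith : (2:ℝ)⁻¹ ≤ uF σ₁ σ₂ r a)
  simpa using h3

lemma Ctx.G1nonneg {σ σ₁ σ₂ εs ρ δw M3 : ℝ} (hc : Ctx σ σ₁ σ₂ εs ρ δw M3) {r a : ℝ}
    (hr : r ∈ Ioc (0:ℝ) εs) (ha : a ∈ Icc (-ρ) (1+ρ)) :
    0 ≤ Gamma1 σ₁ σ₂ r a := by
  rw [Gamma1_eq]; exact inv_nonneg.mpr (hc.upos hr ha).le

lemma Ctx.wpos {σ σ₁ σ₂ εs ρ δw M3 : ℝ} (hc : Ctx σ σ₁ σ₂ εs ρ δw M3) {r a b : ℝ}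
    (hr : r ∈ Ioc (0:ℝ) εs) (ha : a ∈ Icc (-ρ) (1+ρ)) (hb : b ∈ Icc (-ρ) (1+ρ)) :
    0 < wF σ σ₁ σ₂ r a b := lt_of_lt_of_le hc.hδ (hc.hw r hr a ha b hb)

lemma Ctx.vpos {σ σ₁ σ₂ εs ρ δw M3 : ℝ} (hc : Ctx σ σ₁ σ₂ εs ρ δw M3) {r a b : ℝ}
    (hr : r ∈ Ioc (0:ℝ) εs) (ha : a ∈ Icc (-ρ) (1+ρ)) (hb : b ∈ Icc (-ρ) (1+ρ)) :
    0 < Gamma2 σ σ₁ σ₂ r a b := by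
  rw [Gamma2_eq]; exact Real.sqrt_pos.mpr (hc.wpos hr ha hb)

lemma Ctx.vge {σ σ₁ σ₂ εs ρ δw M3 : ℝ} (hc : Ctx σ σ₁ σ₂ εs ρ δw M3) {r a b : ℝ}
    (hr : r ∈ Ioc (0:ℝ) εs) (ha : a ∈ Icc (-ρ) (1+ρ)) (hb : b ∈ Icc (-ρ) (1+ρ)) :
    Real.sqrt δw ≤ Gamma2 σ σ₁ σ₂ r a b := by
  rw [Gamma2_eq]; exact Real.sqrt_le_sqrt (hc.hw r hr a ha b hb)

lemma Ctx.onevpos {σ σ₁ σ₂ εs ρ δw M3 : ℝ} (hc : Ctx σ σ₁ σ₂ εs ρ δw M3) {r a b : ℝ}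
    (hr : r ∈ Ioc (0:ℝ) εs) (ha : a ∈ Icc (-ρ) (1+ρ)) (hb : b ∈ Icc (-ρ) (1+ρ)) :
    0 < 1 + Gamma2 σ σ₁ σ₂ r a b := by
  have := hc.vpos hr ha hb; linarith

theorem Mem.bound {σ σ₁ σ₂ εs ρ δw M3 : ℝ} (hc : Ctx σ σ₁ σ₂ εs ρ δw M3)
    {p q : ℕ} {f : ℝ → ℝ → ℝ → ℝ → ℝ} (hf : Mem σ σ₁ σ₂ p q f) :
    ∃ K n, 0 ≤ K ∧ ∀ r ∈ Ioc (0:ℝ) εs, ∀ t : ℝ, ∀ a ∈ Icc (-ρ) (1+ρ), ∀ b ∈ Icc (-ρ) (1+ρ),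
      |f r t a b| ≤ K * (r ^ (2*(σ₂-σ₁)))^p * (r ^ (2*(σ-2*σ₁)))^q
          * (1 + |lam1 σ σ₁ σ₂ r a b * t|)^n := by
  induction hf with
  | const c =>
      exact ⟨|c|, 0, abs_nonneg c, fun r hr t a ha b hb => by simp⟩
  | zero p q =>
      refine ⟨0, 0, le_refl 0, fun r hr t a ha b hb => ?_⟩
      simp
  | G1 =>
      refine ⟨2, 0, by norm_num, fun r hr t a ha b hb => ?_⟩
      have h2 : (0:ℝ) ≤ r ^ (2*(σ₂-σ₁)) := Real.rpow_nonneg hr.1.le _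
      have hle := hc.G1le hr ha
      have hnn := hc.G1nonneg hr ha
      simp only [gg1, pow_one, pow_zero, mul_one]
      rw [abs_mul, abs_of_nonneg h2, abs_of_nonneg hnn]
      nlinarith
  | G2 =>
      refine ⟨(1+ρ)*(M3*4), 0,
        mul_nonneg (by linarith [hc.hρ]) (by linarith [hc.hM3]),
        fun r hr t a ha b hb => ?_⟩
      have h3 : (0:ℝ) ≤ r ^ (2*(σ-2*σ₁)) := Real.rpow_nonneg hr.1.le _
      have hle := hc.G1le hr ha
      have hnn := hc.G1nonneg hr ha
      have hbb : |b| ≤ 1 + ρ := by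
        rw [abs_le]; exact ⟨by linarith [hb.1, hc.hρ.le], by linarith [hb.2]⟩
      have hM := hc.hR3 r hr
      simp only [gg2, pow_zero, mul_one]
      rw [abs_mul, abs_mul, abs_of_nonneg h3, abs_pow, abs_of_nonneg hnn]
      have h1 : (Gamma1 σ₁ σ₂ r a)^2 ≤ 4 := by nlinarith
      have s1 : r ^ (2*(σ-2*σ₁)) * (Gamma1 σ₁ σ₂ r a)^2 ≤ M3 * 4 :=
        mul_le_mul hM h1 (pow_nonneg hnn 2) hc.hM3
      exact mul_le_mul hbb s1 (mul_nonneg h3 (pow_nonneg hnn 2)) (by linarith [hc.hρ])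
  | G3 =>
      refine ⟨4, 0, by norm_num, fun r hr t a ha b hb => ?_⟩
      have h3 : (0:ℝ) ≤ r ^ (2*(σ-2*σ₁)) := Real.rpow_nonneg hr.1.le _
      have hle := hc.G1le hr ha
      have hnn := hc.G1nonneg hr ha
      simp only [gg3, pow_zero, mul_one, pow_one]
      rw [abs_mul, abs_of_nonneg h3, abs_pow, abs_of_nonneg hnn]
      have h1 : (Gamma1 σ₁ σ₂ r a)^2 ≤ 4 := by nlinarith
      nlinarith
  | G4 =>
      refine ⟨(Real.sqrt δw)⁻¹, 0, by positivity, fun r hr t a ha b hb => ?_⟩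
      have hv := hc.vpos hr ha hb
      have hvge := hc.vge hr ha hb
      have hsq : (0:ℝ) < Real.sqrt δw := Real.sqrt_pos.mpr hc.hδ
      simp only [gg4, pow_zero, mul_one]
      rw [abs_of_nonneg (inv_nonneg.mpr hv.le)]
      exact inv_anti₀ hsq hvge
  | G5 =>
      refine ⟨1, 0, by norm_num, fun r hr t a ha b hb => ?_⟩
      have hv := hc.vpos hr ha hb
      simp only [gg5, pow_zero, mul_one]
      rw [abs_of_nonneg (inv_nonneg.mpr (by linarith))]
      rw [inv_le_one_iff₀]
      right; linarith
  | LL =>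
      refine ⟨1, 1, by norm_num, fun r hr t a ha b hb => ?_⟩
      simp only [ggL, pow_zero, pow_one, one_mul, mul_one]
      linarith [abs_nonneg (lam1 σ σ₁ σ₂ r a b * t)]
  | @add pp qq ff gg hff hgg ihf ihg =>
      obtain ⟨K1, n1, hK1, h1⟩ := ihf
      obtain ⟨K2, n2, hK2, h2⟩ := ihg
      refine ⟨K1 + K2, max n1 n2, by linarith, fun r hr t a ha b hb => ?_⟩
      have h2' : (0:ℝ) ≤ r ^ (2*(σ₂-σ₁)) := Real.rpow_nonneg hr.1.le _
      have h3' : (0:ℝ) ≤ r ^ (2*(σ-2*σ₁)) := Real.rpow_nonneg hr.1.le _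
      set Z := 1 + |lam1 σ σ₁ σ₂ r a b * t| with hZdef
      have hZ : (1:ℝ) ≤ Z := by
        have := abs_nonneg (lam1 σ σ₁ σ₂ r a b * t); rw [hZdef]; linarith
      have e1 : Z^n1 ≤ Z^(max n1 n2) := pow_le_pow_right₀ hZ (le_max_left _ _)
      have e2 : Z^n2 ≤ Z^(max n1 n2) := pow_le_pow_right₀ hZ (le_max_right _ _)
      have t1 : (0:ℝ) ≤ K1 * (r ^ (2*(σ₂-σ₁)))^pp * (r ^ (2*(σ-2*σ₁)))^qq := by positivity
      have t2 : (0:ℝ) ≤ K2 * (r ^ (2*(σ₂-σ₁)))^pp * (r ^ (2*(σ-2*σ₁)))^qq := by positivity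
      have m1 := mul_le_mul_of_nonneg_left e1 t1
      have m2 := mul_le_mul_of_nonneg_left e2 t2
      calc |ff r t a b + gg r t a b| ≤ |ff r t a b| + |gg r t a b| := abs_add_le _ _
        _ ≤ K1 * (r ^ (2*(σ₂-σ₁)))^pp * (r ^ (2*(σ-2*σ₁)))^qq * Z^n1
            + K2 * (r ^ (2*(σ₂-σ₁)))^pp * (r ^ (2*(σ-2*σ₁)))^qq * Z^n2 :=
              add_le_add (h1 r hr t a ha b hb) (h2 r hr t a ha b hb)
        _ ≤ (K1+K2) * (r ^ (2*(σ₂-σ₁)))^pp * (r ^ (2*(σ-2*σ₁)))^qq * Z^(max n1 n2) := by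
              nlinarith [m1, m2]
  | @mul pp qq pp' qq' ff gg hff hgg ihf ihg =>
      obtain ⟨K1, n1, hK1, h1⟩ := ihf
      obtain ⟨K2, n2, hK2, h2⟩ := ihg
      refine ⟨K1 * K2, n1 + n2, by positivity, fun r hr t a ha b hb => ?_⟩
      have h2' : (0:ℝ) ≤ r ^ (2*(σ₂-σ₁)) := Real.rpow_nonneg hr.1.le _
      have h3' : (0:ℝ) ≤ r ^ (2*(σ-2*σ₁)) := Real.rpow_nonneg hr.1.le _
      set Z := 1 + |lam1 σ σ₁ σ₂ r a b * t| with hZdef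
      have hZ : (0:ℝ) ≤ Z := by
        have := abs_nonneg (lam1 σ σ₁ σ₂ r a b * t); rw [hZdef]; linarith
      rw [abs_mul]
      calc |ff r t a b| * |gg r t a b|
          ≤ (K1 * (r ^ (2*(σ₂-σ₁)))^pp * (r ^ (2*(σ-2*σ₁)))^qq * Z^n1)
            * (K2 * (r ^ (2*(σ₂-σ₁)))^pp' * (r ^ (2*(σ-2*σ₁)))^qq' * Z^n2) :=
            mul_le_mul (h1 r hr t a ha b hb) (h2 r hr t a ha b hb) (abs_nonneg _) (by positivity)
        _ = K1*K2 * (r ^ (2*(σ₂-σ₁)))^(pp+pp') * (r ^ (2*(σ-2*σ₁)))^(qq+qq') * Z^(n1+n2) := by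
            rw [pow_add, pow_add, pow_add]; ring


lemma hasDerivAt_uF (σ₁ σ₂ r a : ℝ) :
    HasDerivAt (fun x => uF σ₁ σ₂ r x) (r ^ (2*(σ₂-σ₁))) a := by
  unfold uF
  simpa using ((hasDerivAt_id a).mul_const (r ^ (2*(σ₂-σ₁)))).const_add 1

lemma hasDerivAt_Gamma1 {σ₁ σ₂ r a : ℝ} (hU : uF σ₁ σ₂ r a ≠ 0) :
    HasDerivAt (fun x => Gamma1 σ₁ σ₂ r x) (-(r ^ (2*(σ₂-σ₁))) / (uF σ₁ σ₂ r a)^2) a :=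
  (hasDerivAt_uF σ₁ σ₂ r a).inv hU

lemma hasDerivAt_wA {σ σ₁ σ₂ r a b : ℝ} (hU : uF σ₁ σ₂ r a ≠ 0) :
    HasDerivAt (fun x => wF σ σ₁ σ₂ r x b)
      (-(4*b*r ^ (2*(σ-2*σ₁)) * (2 * Gamma1 σ₁ σ₂ r a ^ 1 *
          (-(r ^ (2*(σ₂-σ₁))) / (uF σ₁ σ₂ r a)^2)))) a := by
  unfold wF
  exact (((hasDerivAt_Gamma1 hU).pow 2).const_mul (4*b*r ^ (2*(σ-2*σ₁)))).const_sub 1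

lemma hasDerivAt_G2A {σ σ₁ σ₂ r a b : ℝ} (hU : uF σ₁ σ₂ r a ≠ 0)
    (hW : 0 < wF σ σ₁ σ₂ r a b) :
    HasDerivAt (fun x => Gamma2 σ σ₁ σ₂ r x b)
      ((-(4*b*r ^ (2*(σ-2*σ₁)) * (2 * Gamma1 σ₁ σ₂ r a ^ 1 *
          (-(r ^ (2*(σ₂-σ₁))) / (uF σ₁ σ₂ r a)^2)))) / (2 * Gamma2 σ σ₁ σ₂ r a b)) a := by
  have h := (hasDerivAt_wA (σ := σ) (b := b) hU).sqrt hW.ne'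
  exact h

lemma hasDerivAt_wB {σ σ₁ σ₂ r a b : ℝ} :
    HasDerivAt (fun y => wF σ σ₁ σ₂ r a y)
      (-(4 * 1 * r ^ (2*(σ-2*σ₁)) * (Gamma1 σ₁ σ₂ r a)^2)) b := by
  unfold wF
  exact ((((hasDerivAt_id b).const_mul 4).mul_const (r ^ (2*(σ-2*σ₁)))).mul_const
    ((Gamma1 σ₁ σ₂ r a)^2)).const_sub 1

lemma hasDerivAt_G2B {σ σ₁ σ₂ r a b : ℝ} (hW : 0 < wF σ σ₁ σ₂ r a b) :
    HasDerivAt (fun y => Gamma2 σ σ₁ σ₂ r a y)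
      ((-(4 * 1 * r ^ (2*(σ-2*σ₁)) * (Gamma1 σ₁ σ₂ r a)^2)) / (2 * Gamma2 σ σ₁ σ₂ r a b)) b := by
  have h := (hasDerivAt_wB (σ := σ) (σ₁ := σ₁) (σ₂ := σ₂) (r := r) (a := a) (b := b)).sqrt hW.ne'
  exact h

theorem Mem.derivA {σ σ₁ σ₂ εs ρ δw M3 : ℝ} (hc : Ctx σ σ₁ σ₂ εs ρ δw M3)
    {p q : ℕ} {f : ℝ → ℝ → ℝ → ℝ → ℝ} (hf : Mem σ σ₁ σ₂ p q f) :
    ∃ fa, Mem σ σ₁ σ₂ (p+1) q fa ∧ ∀ r ∈ Ioc (0:ℝ) εs, ∀ t : ℝ,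
      ∀ a ∈ Ioo (-ρ) (1+ρ), ∀ b ∈ Ioo (-ρ) (1+ρ),
      HasDerivAt (fun x => f r t x b) (fa r t a b) a := by
  induction hf with
  | const c =>
      exact ⟨fun _ _ _ _ => 0, Mem.zero 1 0, fun r hr t a ha b hb => hasDerivAt_const a c⟩
  | zero p q =>
      exact ⟨fun _ _ _ _ => 0, Mem.zero (p+1) q, fun r hr t a ha b hb => hasDerivAt_const a 0⟩
  | G1 =>
      refine ⟨fun r t a b => (-1:ℝ) * (gg1 σ₁ σ₂ r t a b * gg1 σ₁ σ₂ r t a b),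
        (Mem.const (-1)).mul (Mem.G1.mul Mem.G1), fun r hr t a ha b hb => ?_⟩
      have hU := (hc.upos hr (Ioo_subset_Icc_self ha)).ne'
      have h := (hasDerivAt_Gamma1 hU).const_mul (r ^ (2*(σ₂-σ₁)))
      refine h.congr_deriv ?_
      simp only [gg1, Gamma1_eq]
      ring
  | G2 =>
      refine ⟨fun r t a b => (-2:ℝ) * (gg1 σ₁ σ₂ r t a b * gg2 σ σ₁ σ₂ r t a b),
        (Mem.const (-2)).mul (Mem.G1.mul Mem.G2), fun r hr t a ha b hb => ?_⟩
      have hU := (hc.upos hr (Ioo_subset_Icc_self ha)).ne'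
      have h := (((hasDerivAt_Gamma1 hU).pow 2).const_mul
        (r ^ (2*(σ-2*σ₁)))).const_mul b
      refine h.congr_deriv ?_
      simp only [gg1, gg2, Gamma1_eq]
      push_cast
      ring
  | G3 =>
      refine ⟨fun r t a b => (-2:ℝ) * (gg1 σ₁ σ₂ r t a b * gg3 σ σ₁ σ₂ r t a b),
        (Mem.const (-2)).mul (Mem.G1.mul Mem.G3), fun r hr t a ha b hb => ?_⟩
      have hU := (hc.upos hr (Ioo_subset_Icc_self ha)).ne'
      have h := ((hasDerivAt_Gamma1 hU).pow 2).const_mul (r ^ (2*(σ-2*σ₁)))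
      refine h.congr_deriv ?_
      simp only [gg1, gg3, Gamma1_eq]
      push_cast
      ring
  | G4 =>
      refine ⟨fun r t a b => (-4:ℝ) * (gg1 σ₁ σ₂ r t a b * (gg2 σ σ₁ σ₂ r t a b *
          (gg4 σ σ₁ σ₂ r t a b * (gg4 σ σ₁ σ₂ r t a b * gg4 σ σ₁ σ₂ r t a b)))),
        (Mem.const (-4)).mul (Mem.G1.mul (Mem.G2.mul (Mem.G4.mul (Mem.G4.mul Mem.G4)))),
        fun r hr t a ha b hb => ?_⟩
      have hU := (hc.upos hr (Ioo_subset_Icc_self ha)).ne'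
      have hW := hc.wpos hr (Ioo_subset_Icc_self ha) (Ioo_subset_Icc_self hb)
      have hV := (hc.vpos hr (Ioo_subset_Icc_self ha) (Ioo_subset_Icc_self hb)).ne'
      have h := (hasDerivAt_G2A hU hW).inv hV
      refine h.congr_deriv ?_
      simp only [gg1, gg2, gg4, Gamma1_eq]
      push_cast
      field_simp
  | G5 =>
      refine ⟨fun r t a b => (-4:ℝ) * (gg1 σ₁ σ₂ r t a b * (gg2 σ σ₁ σ₂ r t a b *
          (gg4 σ σ₁ σ₂ r t a b * (gg5 σ σ₁ σ₂ r t a b * gg5 σ σ₁ σ₂ r t a b)))),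
        (Mem.const (-4)).mul (Mem.G1.mul (Mem.G2.mul (Mem.G4.mul (Mem.G5.mul Mem.G5)))),
        fun r hr t a ha b hb => ?_⟩
      have hU := (hc.upos hr (Ioo_subset_Icc_self ha)).ne'
      have hW := hc.wpos hr (Ioo_subset_Icc_self ha) (Ioo_subset_Icc_self hb)
      have hV := hc.vpos hr (Ioo_subset_Icc_self ha) (Ioo_subset_Icc_self hb)
      have hV1 := (hc.onevpos hr (Ioo_subset_Icc_self ha) (Ioo_subset_Icc_self hb)).ne'
      have h := ((hasDerivAt_G2A hU hW).const_add 1).inv hV1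
      refine h.congr_deriv ?_
      simp only [gg1, gg2, gg4, gg5, Gamma1_eq]
      push_cast
      field_simp
  | LL =>
      refine ⟨fun r t a b => (-1:ℝ) * (ggL σ σ₁ σ₂ r t a b * (gg1 σ₁ σ₂ r t a b +
          (4:ℝ) * (gg1 σ₁ σ₂ r t a b * (gg2 σ σ₁ σ₂ r t a b *
            (gg4 σ σ₁ σ₂ r t a b * gg5 σ σ₁ σ₂ r t a b))))),
        (Mem.const (-1)).mul (Mem.LL.mul (Mem.G1.add ((Mem.const 4).mul
          (Mem.G1.mul (Mem.G2.mul (Mem.G4.mul Mem.G5)))))),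
        fun r hr t a ha b hb => ?_⟩
      have hU := (hc.upos hr (Ioo_subset_Icc_self ha)).ne'
      have hW := hc.wpos hr (Ioo_subset_Icc_self ha) (Ioo_subset_Icc_self hb)
      have hV := hc.vpos hr (Ioo_subset_Icc_self ha) (Ioo_subset_Icc_self hb)
      have hV1 := (hc.onevpos hr (Ioo_subset_Icc_self ha) (Ioo_subset_Icc_self hb)).ne'
      have h5 := ((hasDerivAt_G2A hU hW).const_add 1).inv hV1
      have h := (((hasDerivAt_Gamma1 hU).const_mul (-2 * r ^ (2*(σ-σ₁)))).mul h5).mul_const t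
      have h' : HasDerivAt (fun x => lam1 σ σ₁ σ₂ r x b * t) _ a := h
      refine h'.congr_deriv ?_
      simp only [ggL, gg1, gg2, gg4, gg5, lam1, Gamma1_eq, Pi.inv_apply]
      push_cast
      field_simp
  | @add pp qq ff gg hff hgg ihf ihg =>
      obtain ⟨fa1, hm1, h1⟩ := ihf
      obtain ⟨fa2, hm2, h2⟩ := ihg
      exact ⟨fun r t a b => fa1 r t a b + fa2 r t a b, hm1.add hm2,
        fun r hr t a ha b hb => (h1 r hr t a ha b hb).add (h2 r hr t a ha b hb)⟩
  | @mul pp qq pp' qq' ff gg hff hgg ihf ihg =>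
      obtain ⟨fa1, hm1, h1⟩ := ihf
      obtain ⟨fa2, hm2, h2⟩ := ihg
      refine ⟨fun r t a b => fa1 r t a b * gg r t a b + ff r t a b * fa2 r t a b,
        ?_, fun r hr t a ha b hb => (h1 r hr t a ha b hb).mul (h2 r hr t a ha b hb)⟩
      have t1 : Mem σ σ₁ σ₂ ((pp+1)+pp') (qq+qq') (fun r t a b => fa1 r t a b * gg r t a b) :=
        hm1.mul hgg
      have t2 : Mem σ σ₁ σ₂ (pp+(pp'+1)) (qq+qq') (fun r t a b => ff r t a b * fa2 r t a b) :=
        hff.mul hm2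
      exact (t1.of_eq (by omega) rfl (fun _ _ _ _ => rfl)).add
        (t2.of_eq (by omega) rfl (fun _ _ _ _ => rfl))


theorem Mem.derivB {σ σ₁ σ₂ εs ρ δw M3 : ℝ} (hc : Ctx σ σ₁ σ₂ εs ρ δw M3)
    {p q : ℕ} {f : ℝ → ℝ → ℝ → ℝ → ℝ} (hf : Mem σ σ₁ σ₂ p q f) :
    ∃ fb, Mem σ σ₁ σ₂ p (q+1) fb ∧ ∀ r ∈ Ioc (0:ℝ) εs, ∀ t : ℝ,
      ∀ a ∈ Ioo (-ρ) (1+ρ), ∀ b ∈ Ioo (-ρ) (1+ρ),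
      HasDerivAt (fun y => f r t a y) (fb r t a b) b := by
  induction hf with
  | const c =>
      exact ⟨fun _ _ _ _ => 0, Mem.zero 0 1, fun r hr t a ha b hb => hasDerivAt_const b c⟩
  | zero p q =>
      exact ⟨fun _ _ _ _ => 0, Mem.zero p (q+1), fun r hr t a ha b hb => hasDerivAt_const b 0⟩
  | G1 =>
      exact ⟨fun _ _ _ _ => 0, Mem.zero 1 1, fun r hr t a ha b hb =>
        hasDerivAt_const b (gg1 σ₁ σ₂ r t a b)⟩
  | G2 =>
      refine ⟨gg3 σ σ₁ σ₂, Mem.G3, fun r hr t a ha b hb => ?_⟩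
      have h := (hasDerivAt_id b).mul_const
        (r ^ (2*(σ-2*σ₁)) * (Gamma1 σ₁ σ₂ r a)^2)
      refine h.congr_deriv ?_
      simp only [gg2, gg3]
      ring
  | G3 =>
      exact ⟨fun _ _ _ _ => 0, Mem.zero 0 2, fun r hr t a ha b hb =>
        hasDerivAt_const b (gg3 σ σ₁ σ₂ r t a b)⟩
  | G4 =>
      refine ⟨fun r t a b => (2:ℝ) * (gg3 σ σ₁ σ₂ r t a b *
          (gg4 σ σ₁ σ₂ r t a b * (gg4 σ σ₁ σ₂ r t a b * gg4 σ σ₁ σ₂ r t a b))),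
        (Mem.const 2).mul (Mem.G3.mul (Mem.G4.mul (Mem.G4.mul Mem.G4))),
        fun r hr t a ha b hb => ?_⟩
      have hW := hc.wpos hr (Ioo_subset_Icc_self ha) (Ioo_subset_Icc_self hb)
      have hV := (hc.vpos hr (Ioo_subset_Icc_self ha) (Ioo_subset_Icc_self hb)).ne'
      have h := (hasDerivAt_G2B hW).inv hV
      refine h.congr_deriv ?_
      simp only [gg3, gg4]
      field_simp
      ring
  | G5 =>
      refine ⟨fun r t a b => (2:ℝ) * (gg3 σ σ₁ σ₂ r t a b *
          (gg4 σ σ₁ σ₂ r t a b * (gg5 σ σ₁ σ₂ r t a b * gg5 σ σ₁ σ₂ r t a b))),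
        (Mem.const 2).mul (Mem.G3.mul (Mem.G4.mul (Mem.G5.mul Mem.G5))),
        fun r hr t a ha b hb => ?_⟩
      have hW := hc.wpos hr (Ioo_subset_Icc_self ha) (Ioo_subset_Icc_self hb)
      have hV := hc.vpos hr (Ioo_subset_Icc_self ha) (Ioo_subset_Icc_self hb)
      have hV1 := (hc.onevpos hr (Ioo_subset_Icc_self ha) (Ioo_subset_Icc_self hb)).ne'
      have h := ((hasDerivAt_G2B hW).const_add 1).inv hV1
      refine h.congr_deriv ?_
      simp only [gg3, gg4, gg5]
      field_simp
      ring
  | LL =>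
      refine ⟨fun r t a b => (2:ℝ) * (ggL σ σ₁ σ₂ r t a b * (gg3 σ σ₁ σ₂ r t a b *
          (gg4 σ σ₁ σ₂ r t a b * gg5 σ σ₁ σ₂ r t a b))),
        (Mem.const 2).mul (Mem.LL.mul (Mem.G3.mul (Mem.G4.mul Mem.G5))),
        fun r hr t a ha b hb => ?_⟩
      have hW := hc.wpos hr (Ioo_subset_Icc_self ha) (Ioo_subset_Icc_self hb)
      have hV := hc.vpos hr (Ioo_subset_Icc_self ha) (Ioo_subset_Icc_self hb)
      have hV1 := (hc.onevpos hr (Ioo_subset_Icc_self ha) (Ioo_subset_Icc_self hb)).ne'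
      have h5 := ((hasDerivAt_G2B hW).const_add 1).inv hV1
      have h := (h5.const_mul (-2 * r ^ (2*(σ-σ₁)) * Gamma1 σ₁ σ₂ r a)).mul_const t
      have h' : HasDerivAt (fun y => lam1 σ σ₁ σ₂ r a y * t) _ b := h
      refine h'.congr_deriv ?_
      simp only [ggL, gg3, gg4, gg5, lam1]
      field_simp
      ring
  | @add pp qq ff gg hff hgg ihf ihg =>
      obtain ⟨fa1, hm1, h1⟩ := ihf
      obtain ⟨fa2, hm2, h2⟩ := ihg
      exact ⟨fun r t a b => fa1 r t a b + fa2 r t a b, hm1.add hm2,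
        fun r hr t a ha b hb => (h1 r hr t a ha b hb).add (h2 r hr t a ha b hb)⟩
  | @mul pp qq pp' qq' ff gg hff hgg ihf ihg =>
      obtain ⟨fa1, hm1, h1⟩ := ihf
      obtain ⟨fa2, hm2, h2⟩ := ihg
      refine ⟨fun r t a b => fa1 r t a b * gg r t a b + ff r t a b * fa2 r t a b,
        ?_, fun r hr t a ha b hb => (h1 r hr t a ha b hb).mul (h2 r hr t a ha b hb)⟩
      have t1 : Mem σ σ₁ σ₂ (pp+pp') (qq+1+qq') (fun r t a b => fa1 r t a b * gg r t a b) :=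
        hm1.mul hgg
      have t2 : Mem σ σ₁ σ₂ (pp+pp') (qq+(qq'+1)) (fun r t a b => ff r t a b * fa2 r t a b) :=
        hff.mul hm2
      exact (t1.of_eq rfl (by omega) (fun _ _ _ _ => rfl)).add
        (t2.of_eq rfl (by omega) (fun _ _ _ _ => rfl))


theorem repA {σ σ₁ σ₂ εs ρ δw M3 : ℝ} (hc : Ctx σ σ₁ σ₂ εs ρ δw M3) (j : ℕ) :
    ∃ Q, Mem σ σ₁ σ₂ j 0 Q ∧ ∀ r ∈ Ioc (0:ℝ) εs, ∀ t : ℝ,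
      ∀ b ∈ Ioo (-ρ) (1+ρ), ∀ a ∈ Ioo (-ρ) (1+ρ),
      iteratedDeriv j (fun x => Real.exp (lam1 σ σ₁ σ₂ r x b * t)) a
        = Real.exp (lam1 σ σ₁ σ₂ r a b * t) * Q r t a b := by
  induction j with
  | zero =>
      exact ⟨fun _ _ _ _ => 1, Mem.const 1, fun r hr t b hb a ha => by simp⟩
  | succ j ih =>
      obtain ⟨Q, hQm, hQ⟩ := ih
      obtain ⟨Qa, hQam, hQa⟩ := hQm.derivA hc
      obtain ⟨La, hLam, hLa⟩ := Mem.LL.derivA hc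
      refine ⟨fun r t a b => La r t a b * Q r t a b + Qa r t a b,
        ((hLam.mul hQm).of_eq (by omega) rfl (fun _ _ _ _ => rfl)).add hQam,
        fun r hr t b hb a ha => ?_⟩
      rw [iteratedDeriv_succ]
      have hev : iteratedDeriv j (fun x => Real.exp (lam1 σ σ₁ σ₂ r x b * t))
          =ᶠ[nhds a] fun x => Real.exp (lam1 σ σ₁ σ₂ r x b * t) * Q r t x b :=
        Filter.eventuallyEq_of_mem (Ioo_mem_nhds ha.1 ha.2)
          (fun x hx => hQ r hr t b hb x hx)
      rw [hev.deriv_eq]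
      have hL : HasDerivAt (fun x => lam1 σ σ₁ σ₂ r x b * t) (La r t a b) a :=
        hLa r hr t a ha b hb
      have hD := (hL.exp).mul (hQa r hr t a ha b hb)
      refine hD.deriv.trans ?_
      ring

theorem repB {σ σ₁ σ₂ εs ρ δw M3 : ℝ} (hc : Ctx σ σ₁ σ₂ εs ρ δw M3) (j m : ℕ) :
    ∃ P, Mem σ σ₁ σ₂ j m P ∧ ∀ r ∈ Ioc (0:ℝ) εs, ∀ t : ℝ,
      ∀ a ∈ Ioo (-ρ) (1+ρ), ∀ b ∈ Ioo (-ρ) (1+ρ),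
      iteratedDeriv m (fun y => iteratedDeriv j
          (fun x => Real.exp (lam1 σ σ₁ σ₂ r x y * t)) a) b
        = Real.exp (lam1 σ σ₁ σ₂ r a b * t) * P r t a b := by
  induction m with
  | zero =>
      obtain ⟨Q, hQm, hQ⟩ := repA hc j
      exact ⟨Q, hQm, fun r hr t a ha b hb => by
        simpa using hQ r hr t b hb a ha⟩
  | succ m ih =>
      obtain ⟨P, hPm, hP⟩ := ih
      obtain ⟨Pb, hPbm, hPb⟩ := hPm.derivB hc
      obtain ⟨Lb, hLbm, hLb⟩ := Mem.LL.derivB hc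
      refine ⟨fun r t a b => Lb r t a b * P r t a b + Pb r t a b,
        ((hLbm.mul hPm).of_eq (by omega) (by omega) (fun _ _ _ _ => rfl)).add hPbm,
        fun r hr t a ha b hb => ?_⟩
      rw [iteratedDeriv_succ]
      have hev : iteratedDeriv m (fun y => iteratedDeriv j
            (fun x => Real.exp (lam1 σ σ₁ σ₂ r x y * t)) a)
          =ᶠ[nhds b] fun y => Real.exp (lam1 σ σ₁ σ₂ r a y * t) * P r t a y :=
        Filter.eventuallyEq_of_mem (Ioo_mem_nhds hb.1 hb.2)
          (fun y hy => hP r hr t a ha y hy)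
      rw [hev.deriv_eq]
      have hL : HasDerivAt (fun y => lam1 σ σ₁ σ₂ r a y * t) (Lb r t a b) b :=
        hLb r hr t a ha b hb
      have hD := (hL.exp).mul (hPb r hr t a ha b hb)
      refine hD.deriv.trans ?_
      ring

lemma pow_aux (n : ℕ) (x : ℝ) (hx : 0 ≤ x) :
    (1+x)^n ≤ (2*((n:ℝ)+1))^n * Real.exp (x/2) := by
  have hn : (0:ℝ) < 2*((n:ℝ)+1) := by positivity
  have h1 : 1 + x ≤ (2*((n:ℝ)+1)) * Real.exp (x/(2*((n:ℝ)+1))) := by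
    have h2 := Real.add_one_le_exp (x/(2*((n:ℝ)+1)))
    have h3 := mul_le_mul_of_nonneg_left h2 hn.le
    have h4 : (2*((n:ℝ)+1)) * (x/(2*((n:ℝ)+1)) + 1) = x + 2*((n:ℝ)+1) := by
      field_simp
    nlinarith [(Nat.cast_nonneg n : (0:ℝ) ≤ n)]
  calc (1+x)^n ≤ ((2*((n:ℝ)+1)) * Real.exp (x/(2*((n:ℝ)+1))))^n :=
        pow_le_pow_left₀ (by linarith) h1 n
    _ = (2*((n:ℝ)+1))^n * (Real.exp (x/(2*((n:ℝ)+1))))^n := mul_pow _ _ _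
    _ = (2*((n:ℝ)+1))^n * Real.exp ((n:ℝ) * (x/(2*((n:ℝ)+1)))) := by
        rw [← Real.exp_nat_mul]
    _ ≤ (2*((n:ℝ)+1))^n * Real.exp (x/2) := by
        apply mul_le_mul_of_nonneg_left _ (by positivity)
        apply Real.exp_le_exp.mpr
        rw [← mul_div_assoc, div_le_div_iff₀ hn (by norm_num : (0:ℝ) < 2)]
        nlinarith [(Nat.cast_nonneg n : (0:ℝ) ≤ n)]


end Stmt4Aux

set_option maxHeartbeats 1000000 in
open Stmt4Aux in
theorem stmt4 (σ σ₁ σ₂ εs c₁ : ℝ) (hσ : 1 ≤ σ) (hσ₁ : 0 ≤ σ₁) (h12 : σ₁ < σ / 2)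
    (h22 : σ / 2 < σ₂) (h2σ : σ₂ ≤ σ) (hε : 0 < εs) (hc₁ : 0 < c₁)
    (hpos : ∀ r ∈ Set.Ioc (0:ℝ) εs, ∀ a ∈ Set.Icc (0:ℝ) 1, ∀ b ∈ Set.Icc (0:ℝ) 1,
      0 < 1 - 4*b*r ^ (2*(σ-2*σ₁)) * (Gamma1 σ₁ σ₂ r a)^2)
    (hlam : ∀ r ∈ Set.Ioc (0:ℝ) εs, ∀ a ∈ Set.Icc (0:ℝ) 1, ∀ b ∈ Set.Icc (0:ℝ) 1,
      lam1 σ σ₁ σ₂ r a b ≤ -c₁ * r ^ (2*(σ-σ₁)))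
    (j m : ℕ) :
    ∃ C > 0, ∃ c > 0, ∀ t > 0, ∀ r ∈ Set.Ioc (0:ℝ) εs, ∀ a ∈ Set.Icc (0:ℝ) 1,
      ∀ b ∈ Set.Icc (0:ℝ) 1,
      |pderiv2 j m (fun a' b' => Real.exp (lam1 σ σ₁ σ₂ r a' b' * t)) a b|
        ≤ C * Real.exp (-c * r ^ (2*(σ-σ₁)) * t)
            * r ^ (2*(j:ℝ)*(σ₂-σ₁) + 2*(m:ℝ)*(σ-2*σ₁)) := by
  have he2 : (0:ℝ) < 2*(σ₂-σ₁) := by linarith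
  have he3 : (0:ℝ) < 2*(σ-2*σ₁) := by linarith
  have he1 : (0:ℝ) < 2*(σ-σ₁) := by linarith
  have hε3pos : (0:ℝ) < εs ^ (2*(σ-2*σ₁)) := Real.rpow_pos_of_pos hε _
  have hδ0 : 0 < 1 - 4*εs ^ (2*(σ-2*σ₁)) := by
    have h := hpos εs ⟨hε, le_refl εs⟩ 0 ⟨le_refl 0, zero_le_one⟩ 1 ⟨zero_le_one, le_refl 1⟩
    simp only [Gamma1, zero_mul, add_zero, inv_one, one_pow, mul_one] at h
    linarith
  obtain ⟨δ0, hδ0def⟩ : ∃ δ0 : ℝ, δ0 = 1 - 4*εs ^ (2*(σ-2*σ₁)) := ⟨_, rfl⟩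
  rw [← hδ0def] at hδ0
  have hδ0lt : δ0 < 1 := by rw [hδ0def]; linarith
  obtain ⟨M2, hM2def⟩ : ∃ M2 : ℝ, M2 = max 1 (εs ^ (2*(σ₂-σ₁))) := ⟨_, rfl⟩
  have hM2 : (1:ℝ) ≤ M2 := hM2def ▸ le_max_left _ _
  obtain ⟨M3, hM3def⟩ : ∃ M3 : ℝ, M3 = max 1 (εs ^ (2*(σ-2*σ₁))) := ⟨_, rfl⟩
  have hM3 : (0:ℝ) ≤ M3 := hM3def ▸ le_trans zero_le_one (le_max_left _ _)
  obtain ⟨s, hsdef⟩ : ∃ s : ℝ, s = min (1/2 : ℝ) (δ0/26) := ⟨_, rfl⟩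
  have hs0 : 0 < s := hsdef ▸ lt_min (by norm_num) (by linarith)
  have hs12 : s ≤ 1/2 := hsdef ▸ min_le_left _ _
  have hs26 : s ≤ δ0/26 := hsdef ▸ min_le_right _ _
  obtain ⟨ρ, hρdef⟩ : ∃ ρ : ℝ, ρ = s / M2 := ⟨_, rfl⟩
  have hρ0 : 0 < ρ := hρdef ▸ div_pos hs0 (by linarith)
  have hρs : ρ * M2 = s := by rw [hρdef]; exact div_mul_cancel₀ s (by linarith : M2 ≠ 0)
  have hρles : ρ ≤ s := by rw [hρdef]; exact div_le_self hs0.le hM2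
  have hR2le : ∀ r ∈ Ioc (0:ℝ) εs, r ^ (2*(σ₂-σ₁)) ≤ M2 := fun r hr => hM2def ▸
    le_trans (Real.rpow_le_rpow hr.1.le hr.2 he2.le) (le_max_right _ _)
  have hR3le : ∀ r ∈ Ioc (0:ℝ) εs, r ^ (2*(σ-2*σ₁)) ≤ M3 := fun r hr => hM3def ▸
    le_trans (Real.rpow_le_rpow hr.1.le hr.2 he3.le) (le_max_right _ _)
  have hR3δ : ∀ r ∈ Ioc (0:ℝ) εs, 4 * r ^ (2*(σ-2*σ₁)) ≤ 1 - δ0 := by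
    intro r hr
    have := Real.rpow_le_rpow hr.1.le hr.2 he3.le
    rw [hδ0def]; linarith
  -- lower bound for u on the extended domain
  have hu1 : ∀ r ∈ Ioc (0:ℝ) εs, ∀ a ∈ Icc (-ρ) (1+ρ), 1 - s ≤ uF σ₁ σ₂ r a := by
    intro r hr a ha
    have hR2pos := Real.rpow_pos_of_pos hr.1 (2*(σ₂-σ₁))
    have h1 : (-ρ) * r ^ (2*(σ₂-σ₁)) ≤ a * r ^ (2*(σ₂-σ₁)) :=
      mul_le_mul_of_nonneg_right ha.1 hR2pos.le
    have h2 : ρ * r ^ (2*(σ₂-σ₁)) ≤ ρ * M2 :=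
      mul_le_mul_of_nonneg_left (hR2le r hr) hρ0.le
    show 1 - s ≤ 1 + a * r ^ (2*(σ₂-σ₁))
    nlinarith
  have hu : ∀ r ∈ Ioc (0:ℝ) εs, ∀ a ∈ Icc (-ρ) (1+ρ), 1/2 ≤ uF σ₁ σ₂ r a := by
    intro r hr a ha
    have := hu1 r hr a ha
    linarith
  -- lower bound for w on the extended domain
  have hw : ∀ r ∈ Ioc (0:ℝ) εs, ∀ a ∈ Icc (-ρ) (1+ρ), ∀ b ∈ Icc (-ρ) (1+ρ),
      δ0/2 ≤ wF σ σ₁ σ₂ r a b := by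
    intro r hr a ha b hb
    have hR3pos := Real.rpow_pos_of_pos hr.1 (2*(σ-2*σ₁))
    have hu1' := hu1 r hr a ha
    have hupos : 0 < uF σ₁ σ₂ r a := by nlinarith
    have hΓnn : 0 ≤ Gamma1 σ₁ σ₂ r a := by
      rw [Gamma1_eq]; exact inv_nonneg.mpr hupos.le
    show δ0/2 ≤ 1 - 4*b*r ^ (2*(σ-2*σ₁)) * (Gamma1 σ₁ σ₂ r a)^2
    rcases le_or_gt b 0 with hb0 | hb0
    · have hx := mul_nonneg hR3pos.le (sq_nonneg (Gamma1 σ₁ σ₂ r a))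
      nlinarith
    · have h1s : (0:ℝ) < 1 - s := by linarith
      have hΓle : Gamma1 σ₁ σ₂ r a ≤ (1-s)⁻¹ := by
        rw [Gamma1_eq]
        exact inv_anti₀ h1s hu1'
      have key : (1+s)*(1-δ0) ≤ (1-δ0/2)*(1-s)^2 := by nlinarith [sq_nonneg s]
      have hbs : b ≤ 1 + s := by linarith [hb.2, hρles]
      have hΓ2 : (Gamma1 σ₁ σ₂ r a)^2 ≤ ((1-s)⁻¹)^2 := pow_le_pow_left₀ hΓnn hΓle 2
      have c1 : 4*b*r ^ (2*(σ-2*σ₁)) ≤ (1+s)*(1-δ0) := by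
        nlinarith [mul_le_mul_of_nonneg_left (hR3δ r hr) hb0.le,
          mul_le_mul_of_nonneg_right hbs (by linarith : (0:ℝ) ≤ 1-δ0)]
      have c2 : 4*b*r ^ (2*(σ-2*σ₁)) * (Gamma1 σ₁ σ₂ r a)^2
          ≤ (1+s)*(1-δ0) * ((1-s)⁻¹)^2 :=
        mul_le_mul c1 hΓ2 (sq_nonneg _) (by nlinarith)
      have c3 : (1+s)*(1-δ0) * ((1-s)⁻¹)^2 ≤ 1-δ0/2 := by
        rw [inv_pow]
        exact (mul_inv_le_iff₀ (by positivity)).mpr key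
      linarith
  have hc : Ctx σ σ₁ σ₂ εs ρ (δ0/2) M3 :=
    ⟨hε, hρ0, by linarith, by linarith, hM3, hu, hw, hR3le⟩
  -- the representation and the bound
  obtain ⟨P, hPm, hP⟩ := repB hc j m
  obtain ⟨K, n, hK, hbd⟩ := hPm.bound hc
  refine ⟨(K+1) * (2*((n:ℝ)+1))^n, by positivity, c₁/2, by linarith, ?_⟩
  intro t ht r hr a ha' b hb'
  have hA : a ∈ Ioo (-ρ) (1+ρ) := ⟨by linarith [ha'.1], by linarith [ha'.2]⟩
  have hB : b ∈ Ioo (-ρ) (1+ρ) := ⟨by linarith [hb'.1], by linarith [hb'.2]⟩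
  have hr1pos := Real.rpow_pos_of_pos hr.1 (2*(σ-σ₁))
  obtain ⟨L, hLdef⟩ : ∃ L : ℝ, L = lam1 σ σ₁ σ₂ r a b * t := ⟨_, rfl⟩
  have hLt : L ≤ -c₁ * r ^ (2*(σ-σ₁)) * t := by
    rw [hLdef]
    calc lam1 σ σ₁ σ₂ r a b * t ≤ (-c₁ * r ^ (2*(σ-σ₁))) * t :=
          mul_le_mul_of_nonneg_right (hlam r hr a ha' b hb') ht.le
      _ = -c₁ * r ^ (2*(σ-σ₁)) * t := by ring
  have hL0 : L ≤ 0 := by nlinarith [mul_pos (mul_pos hc₁ hr1pos) ht]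
  have habs : |L| = -L := abs_of_nonpos hL0
  -- the exponential absorption
  have hEZ : Real.exp L * (1 + |L|)^n
      ≤ (2*((n:ℝ)+1))^n * Real.exp (-(c₁/2) * r ^ (2*(σ-σ₁)) * t) := by
    rw [habs]
    have h1 := pow_aux n (-L) (by linarith)
    calc Real.exp L * (1 + -L)^n
        ≤ Real.exp L * ((2*((n:ℝ)+1))^n * Real.exp ((-L)/2)) :=
          mul_le_mul_of_nonneg_left h1 (Real.exp_pos L).le
      _ = (2*((n:ℝ)+1))^n * Real.exp (L + (-L)/2) := by
          rw [Real.exp_add]; ring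
      _ = (2*((n:ℝ)+1))^n * Real.exp (L/2) := by ring_nf
      _ ≤ (2*((n:ℝ)+1))^n * Real.exp (-(c₁/2) * r ^ (2*(σ-σ₁)) * t) := by
          apply mul_le_mul_of_nonneg_left _ (by positivity)
          apply Real.exp_le_exp.mpr
          linarith
  -- the powers of r
  obtain ⟨X, hXdef⟩ : ∃ X : ℝ, X = (r ^ (2*(σ₂-σ₁)))^j := ⟨_, rfl⟩
  obtain ⟨Y, hYdef⟩ : ∃ Y : ℝ, Y = (r ^ (2*(σ-2*σ₁)))^m := ⟨_, rfl⟩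
  have hXY : X * Y = r ^ (2*(j:ℝ)*(σ₂-σ₁) + 2*(m:ℝ)*(σ-2*σ₁)) := by
    rw [hXdef, hYdef, ← Real.rpow_natCast (r ^ (2*(σ₂-σ₁))) j,
      ← Real.rpow_natCast (r ^ (2*(σ-2*σ₁))) m,
      ← Real.rpow_mul hr.1.le, ← Real.rpow_mul hr.1.le,
      ← Real.rpow_add hr.1]
    congr 1
    ring
  have hXnn : 0 ≤ X := hXdef ▸ pow_nonneg (Real.rpow_nonneg hr.1.le _) j
  have hYnn : 0 ≤ Y := hYdef ▸ pow_nonneg (Real.rpow_nonneg hr.1.le _) m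
  have hZnn : 0 ≤ (1 + |L|)^n := by positivity
  -- assemble
  have hform : pderiv2 j m (fun a' b' => Real.exp (lam1 σ σ₁ σ₂ r a' b' * t)) a b
      = Real.exp L * P r t a b := by
    rw [hLdef]
    exact hP r hr t a hA b hB
  have hbd' := hbd r hr t a (Ioo_subset_Icc_self hA) b (Ioo_subset_Icc_self hB)
  have hbd2 : |P r t a b| ≤ (K+1) * X * Y * (1 + |L|)^n := by
    rw [← hXdef, ← hYdef, ← hLdef] at hbd'
    nlinarith [mul_nonneg (mul_nonneg hXnn hYnn) hZnn]
  calc |pderiv2 j m (fun a' b' => Real.exp (lam1 σ σ₁ σ₂ r a' b' * t)) a b|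
      = Real.exp L * |P r t a b| := by
        rw [hform, abs_mul, abs_of_pos (Real.exp_pos L)]
    _ ≤ Real.exp L * ((K+1) * X * Y * (1 + |L|)^n) :=
        mul_le_mul_of_nonneg_left hbd2 (Real.exp_pos L).le
    _ = ((K+1) * X * Y) * (Real.exp L * (1 + |L|)^n) := by ring
    _ ≤ ((K+1) * X * Y) * ((2*((n:ℝ)+1))^n * Real.exp (-(c₁/2) * r ^ (2*(σ-σ₁)) * t)) := by
        apply mul_le_mul_of_nonneg_left hEZ
        have : (0:ℝ) ≤ K + 1 := by linarith
        exact mul_nonneg (mul_nonneg this hXnn) hYnn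
    _ = ((K+1) * (2*((n:ℝ)+1))^n) * Real.exp (-(c₁/2) * r ^ (2*(σ-σ₁)) * t) * (X * Y) := by
        ring
    _ = ((K+1) * (2*((n:ℝ)+1))^n) * Real.exp (-(c₁/2) * r ^ (2*(σ-σ₁)) * t)
          * r ^ (2*(j:ℝ)*(σ₂-σ₁) + 2*(m:ℝ)*(σ-2*σ₁)) := by
        rw [hXY]
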